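/- Let g_k(x) = f_k(x)/f_0(x) where f_k is the N(μ_k, σ_k²) density with μ_k < 0, σ_k² ≥ 1, and f_0 the N(0,1) density. Then any finite convex combination ∑ w_k g_k is monotonically decreasing on (-∞, 0]. -/

import Mathlib

/-- Density of the Gaussian distribution N(μ, σ²). -/
noncomputable def gaussDensity (μ σ x : ℝ) : ℝ :=
  (1 / (σ * Real.sqrt (2 * Real.pi))) * Real.exp (-(x - μ)^2 / (2 * σ^2))

lemma gauss_ratio (μ σ z : ℝ) (hσp : 0 < σ) :
    gaussDensity μ σ z / gaussDensity 0 1 z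
      = (1/σ) * Real.exp (-(z-μ)^2/(2*σ^2) + z^2/2) := by
  have hπ : 0 < Real.sqrt (2 * Real.pi) := Real.sqrt_pos.mpr (by positivity)
  unfold gaussDensity
  rw [Real.exp_add]
  have h1 : Real.exp (-(z - 0)^2 / (2 * 1^2)) ≠ 0 := Real.exp_ne_zero _
  have h2 : Real.exp (z^2/2) = (Real.exp (-(z - 0)^2 / (2 * 1^2)))⁻¹ := by
    rw [← Real.exp_neg]; ring_nf
  rw [h2]
  field_simp

lemma ratio_antitone (μ σ x y : ℝ) (hμ : μ < 0) (hσ : 1 ≤ σ^2) (hσp : 0 < σ)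
    (hxy : x ≤ y) (hy : y ≤ 0) (hx : x ≤ 0) :
    gaussDensity μ σ y / gaussDensity 0 1 y ≤ gaussDensity μ σ x / gaussDensity 0 1 x := by
  rw [gauss_ratio _ _ _ hσp, gauss_ratio _ _ _ hσp]
  have hs : 0 < (1:ℝ)/σ := by positivity
  apply mul_le_mul_of_nonneg_left _ hs.le
  apply Real.exp_le_exp.mpr
  have h1 : 0 ≤ y - x := by linarith
  have h2 : 0 ≤ -(x+y)*(σ^2-1) - 2*μ := by nlinarith
  rw [← sub_nonneg]
  have key : (-(x-μ)^2/(2*σ^2) + x^2/2) - (-(y-μ)^2/(2*σ^2) + y^2/2)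
      = ((y-x)*(-(x+y)*(σ^2-1) - 2*μ))/(2*σ^2) := by
    field_simp
    ring
  rw [key]
  exact div_nonneg (mul_nonneg h1 h2) (by positivity)

/-- Mirror of Theorem 1: if `g_k = f_k / f_0` with `f_k = N(μ_k, σ_k²)`, `μ_k < 0`,
`σ_k² ≥ 1`, `f_0 = N(0,1)`, then any finite convex combination `∑ w_k g_k` is monotonically
decreasing on `(-∞, 0]`. -/
theorem stmt18 (K : ℕ) (μ σ w : Fin K → ℝ)
    (hμ : ∀ k, μ k < 0) (hσ : ∀ k, 1 ≤ (σ k)^2) (hσpos : ∀ k, 0 < σ k)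
    (hw : ∀ k, 0 < w k) (hwsum : ∑ k, w k = 1) :
    AntitoneOn (fun x => ∑ k, w k * (gaussDensity (μ k) (σ k) x / gaussDensity 0 1 x))
      (Set.Iic (0:ℝ)) := by
  intro x hx y hy hxy
  apply Finset.sum_le_sum
  intro k _
  exact mul_le_mul_of_nonneg_left
    (ratio_antitone (μ k) (σ k) x y (hμ k) (hσ k) (hσpos k) hxy hy hx) (hw k).le
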